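/- For all integers k ≥ 3 and m ≥ 1 there exist m pairwise disjoint combinatorial lines L_1, ..., L_m in the Hales-Jewett cube [k]^{2m} such that the only quasilines contained in the union L_1 ∪ ... ∪ L_m are the lines L_1, ..., L_m themselves. -/
import Mathlib


/-- `L` is a combinatorial line in the Hales-Jewett cube `[k]^n`. -/
def IsLine (k n : ℕ) (L : Finset (Fin n → Fin k)) : Prop :=
  ∃ η : Fin k → Fin n → Fin k,
    (∃ M : Finset (Fin n), M.Nonempty ∧
      (∀ i : Fin k, ∀ j ∈ M, η i j = i) ∧
      (∀ i i' : Fin k, ∀ j : Fin n, j ∉ M → η i j = η i' j)) ∧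
    L = Finset.image η Finset.univ

/-- `L` is a quasiline in `[k]^n`: a `k`-element set whose entries in every coordinate
are either all identical or mutually distinct. -/
def IsQuasiline (k n : ℕ) (L : Finset (Fin n → Fin k)) : Prop :=
  L.card = k ∧ ∀ ν : Fin n,
    (∀ x ∈ L, ∀ y ∈ L, x ν = y ν) ∨
    (∀ x ∈ L, ∀ y ∈ L, x ≠ y → x ν ≠ y ν)

theorem disjoint_lines_in_general_position (k m : ℕ) (hk : 3 ≤ k) (hm : 1 ≤ m) :
    ∃ L : Fin m → Finset (Fin (2 * m) → Fin k),
      (∀ i, IsLine k (2 * m) (L i)) ∧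
      (∀ i j, i ≠ j → Disjoint (L i) (L j)) ∧
      (∀ Q : Finset (Fin (2 * m) → Fin k), IsQuasiline k (2 * m) Q →
        Q ⊆ Finset.univ.biUnion L → ∃ i, Q = L i) := by
  have hk0 : 0 < k := by omega
  have hk1 : 1 < k := by omega
  have hk2 : 2 < k := by omega
  set z : Fin k := ⟨0, hk0⟩ with hz
  set o : Fin k := ⟨1, hk1⟩ with ho
  have hzo : z ≠ o := by
    intro h; have := congrArg Fin.val h; simp [hz, ho] at this
  set η : Fin m → Fin k → Fin (2 * m) → Fin k := fun i t ν =>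
    if ν.val / 2 = i.val then t else if ν.val % 2 = 0 then z else o with hηdef
  set L : Fin m → Finset (Fin (2 * m) → Fin k) :=
    fun i => Finset.image (η i) Finset.univ with hLdef
  set ν₀ : Fin m → Fin (2 * m) := fun i => ⟨2 * i.val, by omega⟩ with hν₀def
  set ν₁ : Fin m → Fin (2 * m) := fun i => ⟨2 * i.val + 1, by omega⟩ with hν₁def
  have hν₀ : ∀ i t, η i t (ν₀ i) = t := by
    intro i t
    simp only [hηdef, hν₀def]
    rw [if_pos]; omega
  have hν₁ : ∀ i t, η i t (ν₁ i) = t := by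
    intro i t
    simp only [hηdef, hν₁def]
    rw [if_pos]; omega
  have hmem : ∀ i x, x ∈ L i ↔ ∃ t, η i t = x := by
    intro i x
    simp [hLdef]
  have hother : ∀ i j : Fin m, i ≠ j → ∀ t, η j t (ν₀ i) = z ∧ η j t (ν₁ i) = o := by
    intro i j hij t
    have hij' : i.val ≠ j.val := fun h => hij (Fin.ext h)
    constructor
    · simp only [hηdef, hν₀def]
      rw [if_neg (by omega), if_pos (by omega)]
    · simp only [hηdef, hν₁def]
      rw [if_neg (by omega), if_neg (by omega)]
  have hinj : ∀ i : Fin m, Function.Injective (η i) := by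
    intro i t t' h
    have := congrFun h (ν₀ i)
    rwa [hν₀, hν₀] at this
  have hcardL : ∀ i, (L i).card = k := by
    intro i
    rw [hLdef]
    rw [Finset.card_image_of_injective _ (hinj i)]
    simp
  -- points of L i agree on ν₀ i and ν₁ i
  have hS : ∀ i x, x ∈ L i → x (ν₁ i) = x (ν₀ i) := by
    intro i x hx
    obtain ⟨t, rfl⟩ := (hmem i x).1 hx
    rw [hν₀, hν₁]
  -- points of L j (j ≠ i) are z at ν₀ i and o at ν₁ i
  have hT : ∀ (i : Fin m) x, (∃ j, x ∈ L j) → x ∉ L i → x (ν₀ i) = z ∧ x (ν₁ i) = o := by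
    intro i x ⟨j, hxj⟩ hxi
    have hij : i ≠ j := fun h => hxi (h ▸ hxj)
    obtain ⟨t, rfl⟩ := (hmem j _).1 hxj
    exact hother i j hij t
  refine ⟨L, ?_, ?_, ?_⟩
  · -- each L i is a line
    intro i
    refine ⟨η i, ⟨{ν₀ i, ν₁ i}, ⟨ν₀ i, by simp⟩, ?_, ?_⟩, rfl⟩
    · intro t j hj
      rcases Finset.mem_insert.1 hj with h | h
      · subst h; exact hν₀ i t
      · rw [Finset.mem_singleton] at h; subst h; exact hν₁ i t
    · intro t t' j hj
      have h0 : j ≠ ν₀ i := fun h => hj (by simp [h])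
      have h1 : j ≠ ν₁ i := fun h => hj (by simp [h])
      have h0' : j.val ≠ 2 * i.val := fun h => h0 (Fin.ext (by simp [hν₀def, h]))
      have h1' : j.val ≠ 2 * i.val + 1 := fun h => h1 (Fin.ext (by simp [hν₁def, h]))
      have hcond : ¬ (j.val / 2 = i.val) := by omega
      simp only [hηdef, if_neg hcond]
  · -- disjointness
    intro i j hij
    rw [Finset.disjoint_left]
    intro x hxi hxj
    obtain ⟨t, rfl⟩ := (hmem i x).1 hxi
    obtain ⟨s, hs⟩ := (hmem j _).1 hxj
    have h0 := congrFun hs (ν₀ i)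
    rw [(hother i j hij s).1, hν₀] at h0
    have h1 := congrFun hs (ν₁ i)
    rw [(hother i j hij s).2, hν₁] at h1
    exact hzo (h0.trans h1.symm)
  · -- quasilines in the union are exactly the lines
    intro Q ⟨hcard, hquasi⟩ hsub
    have hmemU : ∀ x ∈ Q, ∃ j, x ∈ L j := by
      intro x hx
      have := hsub hx
      rw [Finset.mem_biUnion] at this
      obtain ⟨j, _, hj⟩ := this
      exact ⟨j, hj⟩
    have hQne : Q.Nonempty := by
      rw [← Finset.card_pos, hcard]; omega
    obtain ⟨p, hp⟩ := hQne
    obtain ⟨i, hpi⟩ := hmemU p hp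
    refine ⟨i, ?_⟩
    have hQsub : Q ⊆ L i := by
      intro q hq
      by_contra hqi
      obtain ⟨hq0, hq1⟩ := hT i q (hmemU q hq) hqi
      rcases hquasi (ν₀ i) with hA | hB
      · -- all equal at ν₀ i
        have hall0 : ∀ x ∈ Q, x (ν₀ i) = z := fun x hx => (hA x hx q hq).trans hq0
        have hval1 : ∀ x ∈ Q, x (ν₁ i) = z ∨ x (ν₁ i) = o := by
          intro x hx
          by_cases hxi : x ∈ L i
          · left; rw [hS i x hxi]; exact hall0 x hx
          · right; exact (hT i x (hmemU x hx) hxi).2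
        have hpz : p (ν₁ i) = z := by rw [hS i p hpi]; exact hall0 p hp
        rcases hquasi (ν₁ i) with hC | hD
        · have := hC p hp q hq
          rw [hpz, hq1] at this
          exact hzo this
        · -- all distinct at ν₁ i, but values in {z, o}: card ≤ 2
          have hinj1 : Set.InjOn (fun x : Fin (2 * m) → Fin k => x (ν₁ i)) (Q : Set (Fin (2 * m) → Fin k)) := by
            intro x hx y hy hxy
            by_contra hne
            exact hD x (Finset.mem_coe.mp hx) y (Finset.mem_coe.mp hy) hne hxy
          have hle : Q.card ≤ ({z, o} : Finset (Fin k)).card :=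
            Finset.card_le_card_of_injOn (fun x => x (ν₁ i))
              (fun x hx => by rcases hval1 x hx with h | h <;> simp [h]) hinj1
          have : ({z, o} : Finset (Fin k)).card ≤ 2 := Finset.card_insert_le _ _ |>.trans (by simp)
          omega
      · -- all distinct at ν₀ i
        have hinjOn : Set.InjOn (fun x : Fin (2 * m) → Fin k => x (ν₀ i)) (Q : Set (Fin (2 * m) → Fin k)) := by
          intro x hx y hy hxy
          by_contra hne
          exact hB x (Finset.mem_coe.mp hx) y (Finset.mem_coe.mp hy) hne hxy
        have himg : Q.image (fun x => x (ν₀ i)) = Finset.univ := by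
          apply Finset.eq_univ_of_card
          rw [Finset.card_image_of_injOn hinjOn, hcard, Fintype.card_fin]
        have hget : ∀ c : Fin k, ∃ x ∈ Q, x (ν₀ i) = c := by
          intro c
          have : c ∈ Q.image (fun x => x (ν₀ i)) := himg ▸ Finset.mem_univ c
          rw [Finset.mem_image] at this
          obtain ⟨x, hx, hxc⟩ := this
          exact ⟨x, hx, hxc⟩
        obtain ⟨x₁, hx₁Q, hx₁⟩ := hget o
        obtain ⟨x₂, hx₂Q, hx₂⟩ := hget ⟨2, hk2⟩
        have hx₁i : x₁ ∈ L i := by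
          by_contra h
          have := (hT i x₁ (hmemU x₁ hx₁Q) h).1
          rw [hx₁] at this
          exact hzo this.symm
        have hx₂i : x₂ ∈ L i := by
          by_contra h
          have := (hT i x₂ (hmemU x₂ hx₂Q) h).1
          rw [hx₂] at this
          have := congrArg Fin.val this
          simp [hz] at this
        have e₁ : x₁ (ν₁ i) = o := by rw [hS i x₁ hx₁i, hx₁]
        have e₂ : x₂ (ν₁ i) = (⟨2, hk2⟩ : Fin k) := by rw [hS i x₂ hx₂i, hx₂]
        rcases hquasi (ν₁ i) with hC | hD
        · have := hC x₂ hx₂Q q hq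
          rw [e₂, hq1] at this
          have := congrArg Fin.val this
          simp [ho] at this
        · have hne : x₁ ≠ q := by
            intro h; exact (h ▸ hqi : x₁ ∉ L i) hx₁i
          exact hD x₁ hx₁Q q hq hne (e₁.trans hq1.symm)
    exact Finset.eq_of_subset_of_card_le hQsub (by rw [hcardL, hcard])
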